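/- Let K ⊂ ℝ^d be a centrally symmetric convex body (K = −K, 0 in its interior) and let γ : ℝ/ℤ → ∂K be a closed Lipschitz curve lying on the boundary of K which is centrally symmetric, i.e. γ(t + 1/2) = −γ(t) for all t. Then the length of γ in the norm whose unit ball is K satisfies ∫₀¹ g_K(γ̇(t)) dt ≥ 4 + 4/d. -/

import Mathlib

noncomputable section

open Set intervalIntegral

/-- `ℝ^d`, the real Euclidean space. -/
abbrev Rd (d : ℕ) := EuclideanSpace ℝ (Fin d)

open MeasureTheory Metric Filter


lemma intervalIntegrable_of_bdd {f : ℝ → ℝ} {C : ℝ} (hm : Measurable f)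
    (hb : ∀ t, |f t| ≤ C) (a b : ℝ) : IntervalIntegrable f volume a b := by
  apply IntervalIntegrable.mono_fun' (g := fun _ => C)
  · exact intervalIntegrable_const
  · exact hm.aestronglyMeasurable
  · exact Filter.Eventually.of_forall (fun t => by simpa using hb t)

/-- FTC inequality for monotone continuous functions. -/
lemma Monotone.integral_deriv_le {f : ℝ → ℝ} (hf : Monotone f) (hc : Continuous f)
    {a b : ℝ} (hab : a ≤ b) : ∫ t in a..b, deriv f t ≤ f b - f a := by
  have hst : ∀ x, hf.stieltjesFunction x = f x := by
    intro x
    rw [hf.stieltjesFunction_eq]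
    exact rightLim_eq_of_tendsto
      ((hc.tendsto x).mono_left nhdsWithin_le_nhds)
  set μ := hf.stieltjesFunction.measure with hμ
  have hae : ∀ᵐ t, deriv f t = (μ.rnDeriv volume t).toReal := by
    filter_upwards [hf.ae_hasDerivAt] with t ht using ht.deriv
  have h1 : ∫ t in a..b, deriv f t = ∫ t in Ioc a b, (μ.rnDeriv volume t).toReal := by
    rw [intervalIntegral.integral_of_le hab]
    exact MeasureTheory.integral_congr_ae (ae_restrict_of_ae hae)
  have h2 : μ (Ioc a b) ≠ ⊤ := by
    rw [hμ, StieltjesFunction.measure_Ioc]; exact ENNReal.ofReal_ne_top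
  have h3 := MeasureTheory.Measure.setIntegral_toReal_rnDeriv_le (ν := volume) h2
  rw [h1]
  refine h3.trans_eq ?_
  rw [measureReal_def, hμ, StieltjesFunction.measure_Ioc, hst, hst,
    ENNReal.toReal_ofReal (sub_nonneg.2 (hf hab))]

lemma norm_deriv_le_of_lip {F : Type*} [NormedAddCommGroup F] [NormedSpace ℝ F]
    {f : ℝ → F} {C : NNReal} (h : LipschitzWith C f) (t : ℝ) : ‖deriv f t‖ ≤ C := by
  rw [← fderiv_apply_one_eq_deriv]
  calc ‖fderiv ℝ f t 1‖ ≤ ‖fderiv ℝ f t‖ * ‖(1:ℝ)‖ := (fderiv ℝ f t).le_opNorm 1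
  _ ≤ C := by simpa using norm_fderiv_le_of_lipschitz ℝ h

/-- FTC inequality for Lipschitz functions. -/
lemma LipschitzWith.sub_le_integral_deriv {φ : ℝ → ℝ} {C : NNReal} (h : LipschitzWith C φ)
    {a b : ℝ} (hab : a ≤ b) : φ b - φ a ≤ ∫ t in a..b, deriv φ t := by
  set f : ℝ → ℝ := fun t => C * t - φ t with hf
  have hmono : Monotone f := by
    intro x y hxy
    have := h.dist_le_mul x y
    rw [Real.dist_eq, Real.dist_eq] at this
    have h2 : φ y - φ x ≤ |φ x - φ y| := by
      rw [abs_sub_comm]; exact le_abs_self _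
    have h3 : |x - y| = y - x := by rw [abs_sub_comm]; exact abs_of_nonneg (by linarith)
    rw [h3] at this
    simp only [hf]
    linarith
  have hcont : Continuous f := (continuous_const.mul continuous_id).sub h.continuous
  have hdint : IntervalIntegrable (deriv φ) volume a b :=
    intervalIntegrable_of_bdd (measurable_deriv φ) (fun t => by
      simpa [Real.norm_eq_abs] using norm_deriv_le_of_lip h t) a b
  have hae : ∀ᵐ t, DifferentiableAt ℝ φ t := h.ae_differentiableAt (μ := volume)
  have hdf : ∀ᵐ t, t ∈ Set.uIoc a b → deriv f t = C - deriv φ t := by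
    filter_upwards [hae] with t ht _
    have hd : HasDerivAt f ((C:ℝ) * 1 - deriv φ t) t :=
      ((hasDerivAt_id t).const_mul (C:ℝ)).sub ht.hasDerivAt
    rw [hd.deriv]; ring
  have h1 : ∫ t in a..b, deriv f t = ∫ t in a..b, ((C : ℝ) - deriv φ t) :=
    intervalIntegral.integral_congr_ae hdf
  have h2 : ∫ t in a..b, ((C : ℝ) - deriv φ t) = C * (b - a) - ∫ t in a..b, deriv φ t := by
    rw [intervalIntegral.integral_sub intervalIntegrable_const hdint]
    simp [mul_comm]
  have h3 := hmono.integral_deriv_le hcont hab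
  rw [h1, h2, hf] at h3
  simp only at h3
  linarith


section GaugeFacts
variable {E : Type*} [NormedAddCommGroup E] [NormedSpace ℝ E] {K : Set E}

lemma balanced_of_symm (hKconv : Convex ℝ K) (hKsym : K = -K) : Balanced ℝ K := by
  intro a ha z hz
  obtain ⟨k, hk, rfl⟩ := hz
  have hnegk : -k ∈ K := by
    rw [hKsym]; simpa using hk
  have h1 : (0:ℝ) ≤ (1 + a)/2 := by
    have := neg_abs_le a; rw [Real.norm_eq_abs] at ha; linarith
  have h2 : (0:ℝ) ≤ (1 - a)/2 := by
    have := le_abs_self a; rw [Real.norm_eq_abs] at ha; linarith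
  have hsum : (1 + a)/2 + (1 - a)/2 = 1 := by ring
  have hmem := hKconv hk hnegk h1 h2 hsum
  have heq : ((1 + a)/2) • k + ((1 - a)/2) • (-k) = a • k := by
    rw [smul_neg, ← sub_eq_add_neg, ← sub_smul]
    congr 1
    ring
  rwa [heq] at hmem

lemma exists_gauge_support (hKconv : Convex ℝ K) (hK0 : K ∈ nhds 0)
    {x : E} (hx : 1 ≤ gauge K x) (hKbal : Balanced ℝ K) :
    ∃ f : E →ₗ[ℝ] ℝ, (∀ z, f z ≤ gauge K z) ∧ f x = -1 := by
  have habs : Absorbent ℝ K := absorbent_nhds_zero hK0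
  have hx0 : x ≠ 0 := by
    rintro rfl
    rw [gauge_zero] at hx; linarith
  obtain ⟨g, hg1, hg2⟩ := exists_extension_of_le_sublinear
    (LinearPMap.mkSpanSingleton x (-1 : ℝ) hx0) (gauge K)
    (fun c hc z => by rw [gauge_smul_of_nonneg hc.le, smul_eq_mul])
    (gauge_add_le hKconv habs)
    (by
      rintro ⟨z, hz⟩
      obtain ⟨c, rfl⟩ := Submodule.mem_span_singleton.1 hz
      have happ : (LinearPMap.mkSpanSingleton x (-1 : ℝ) hx0) ⟨c • x, hz⟩ = c • (-1 : ℝ) :=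
        LinearPMap.mkSpanSingleton'_apply x (-1 : ℝ) _ c hz
      rw [happ, gauge_smul hKbal]
      have hg : 1 ≤ gauge K x := hx
      have : -c ≤ |c| := neg_le_abs c
      have habsc : (0:ℝ) ≤ |c| := abs_nonneg c
      simp only [smul_eq_mul, mul_neg_one, Real.norm_eq_abs]
      nlinarith)
  refine ⟨g, hg2, ?_⟩
  have := hg1 ⟨x, Submodule.mem_span_singleton_self x⟩
  rw [LinearPMap.mkSpanSingleton_apply] at this
  exact this

lemma gauge_le_inv_norm {r : ℝ} (hr : 0 < r) (hball : ball (0:E) r ⊆ K) (z : E) :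
    gauge K z ≤ r⁻¹ * ‖z‖ := by
  have h := gauge_mono (absorbent_nhds_zero (ball_mem_nhds 0 hr)) hball z
  rw [gauge_ball hr.le] at h
  calc gauge K z ≤ ‖z‖ / r := h
  _ = r⁻¹ * ‖z‖ := by ring

end GaugeFacts
section Chord
variable {d : ℕ} {K : Set (Rd d)}

lemma abs_linfunc_le {r : ℝ} (hr : 0 < r) (hball : ball (0:Rd d) r ⊆ K)
    (f : Rd d →ₗ[ℝ] ℝ) (hfg : ∀ z, f z ≤ gauge K z) (z : Rd d) : |f z| ≤ r⁻¹ * ‖z‖ := by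
  rw [abs_le]
  constructor
  · have h1 := hfg (-z)
    rw [map_neg] at h1
    have h2 := gauge_le_inv_norm hr hball (-z)
    rw [norm_neg] at h2
    linarith
  · exact (hfg z).trans (gauge_le_inv_norm hr hball z)

lemma chord_le_integral (hKconv : Convex ℝ K) (hK0 : K ∈ nhds 0)
    {r : ℝ} (hr : 0 < r) (hball : ball (0:Rd d) r ⊆ K)
    {γ : ℝ → Rd d} {L : NNReal} (hlip : LipschitzWith L γ)
    (f : Rd d →ₗ[ℝ] ℝ) (hfg : ∀ z, f z ≤ gauge K z) {a b : ℝ} (hab : a ≤ b) :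
    f (γ b) - f (γ a) ≤ ∫ t in a..b, gauge K (deriv γ t) := by
  set F := LinearMap.toContinuousLinearMap f with hF
  have hFf : ∀ z, F z = f z := fun z => rfl
  have hφ : LipschitzWith (‖F‖₊ * L) (fun t => f (γ t)) := F.lipschitz.comp hlip
  have step1 : f (γ b) - f (γ a) ≤ ∫ t in a..b, deriv (fun t => f (γ t)) t :=
    hφ.sub_le_integral_deriv hab
  have hmeas1 : Measurable (fun t => f (deriv γ t)) :=
    (F.continuous.measurable).comp (measurable_deriv γ)
  have hbd1 : ∀ t, |f (deriv γ t)| ≤ r⁻¹ * L := by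
    intro t
    refine (abs_linfunc_le hr hball f hfg _).trans ?_
    have := norm_deriv_le_of_lip hlip t
    have hrinv : (0:ℝ) ≤ r⁻¹ := (inv_nonneg).2 hr.le
    exact mul_le_mul_of_nonneg_left this hrinv
  have hint1 : IntervalIntegrable (fun t => f (deriv γ t)) volume a b :=
    intervalIntegrable_of_bdd hmeas1 hbd1 a b
  have hmeas2 : Measurable (fun t => gauge K (deriv γ t)) :=
    ((continuous_gauge hKconv hK0).measurable).comp (measurable_deriv γ)
  have hbd2 : ∀ t, |gauge K (deriv γ t)| ≤ r⁻¹ * L := by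
    intro t
    rw [abs_of_nonneg (gauge_nonneg _)]
    refine (gauge_le_inv_norm hr hball _).trans ?_
    exact mul_le_mul_of_nonneg_left (norm_deriv_le_of_lip hlip t) ((inv_nonneg).2 hr.le)
  have hint2 : IntervalIntegrable (fun t => gauge K (deriv γ t)) volume a b :=
    intervalIntegrable_of_bdd hmeas2 hbd2 a b
  have step2 : ∫ t in a..b, deriv (fun t => f (γ t)) t = ∫ t in a..b, f (deriv γ t) := by
    apply intervalIntegral.integral_congr_ae
    filter_upwards [hlip.ae_differentiableAt (μ := volume)] with t ht _
    exact (F.hasFDerivAt.comp_hasDerivAt t ht.hasDerivAt).deriv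
  have step3 : ∫ t in a..b, f (deriv γ t) ≤ ∫ t in a..b, gauge K (deriv γ t) :=
    intervalIntegral.integral_mono_on hab hint1 hint2 (fun t _ => hfg _)
  rw [step2] at step1
  exact step1.trans step3

end Chord

section Core

lemma core_ineq {V : Type*} [AddCommGroup V] [Module ℝ V]
    {n : ℕ} (hn : 1 ≤ n) {x : ℕ → V} (hanti : ∀ k, x (k + n) = -x k)
    {lam : ℕ → ℝ} (hlam_anti : ∀ k, lam (k + n) = -lam k)
    (hdep : ∑ k ∈ Finset.range n, lam k • x k = 0)
    (hlam_ne : ∃ k, k < n ∧ lam k ≠ 0)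
    {h ε : ℝ} (hεdef : ε = n * h - 2)
    (F : ℕ → (V →ₗ[ℝ] ℝ))
    (hFm : ∀ m, F m (x m) = -1)
    (hstep : ∀ m k, F m (x (k + 1)) - F m (x k) ≤ h) :
    h ≤ ε := by
  classical
  have hwin : ∀ m, ∑ k ∈ Finset.range n, lam (m + k) • x (m + k) = 0 := by
    intro m
    induction m with
    | zero => simpa using hdep
    | succ m ih =>
      have e2 : (∑ k ∈ Finset.range n, lam (m + 1 + k) • x (m + 1 + k))
          = ∑ k ∈ Finset.range n, lam (m + (k + 1)) • x (m + (k + 1)) := by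
        refine Finset.sum_congr rfl fun k _ => by rw [show m + 1 + k = m + (k+1) from by omega]
      have e3 := Finset.sum_range_succ' (fun k => lam (m + k) • x (m + k)) n
      have e4 := Finset.sum_range_succ (fun k => lam (m + k) • x (m + k)) n
      have e5 : lam (m + n) • x (m + n) = lam (m + 0) • x (m + 0) := by
        rw [hlam_anti m, hanti m]
        simp
      rw [e2]
      have e6 : (∑ k ∈ Finset.range n, lam (m + (k+1)) • x (m + (k+1)))
          = (∑ k ∈ Finset.range n, lam (m + k) • x (m + k)) + lam (m + n) • x (m + n)
            - lam (m + 0) • x (m + 0) := by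
        rw [← e4, e3]
        abel
      rw [e6, e5, ih]
      abel
  have hrow : ∀ m, ∑ k ∈ Finset.range n, lam (m + k) * (F m) (x (m + k)) = 0 := by
    intro m
    have := congrArg (F m) (hwin m)
    rw [map_sum, map_zero] at this
    simpa [smul_eq_mul] using this
  set Λ : ℝ := ∑ j ∈ Finset.range n, lam j with hΛ
  set S : ℕ → ℝ := fun k => (∑ j ∈ Finset.range (k + 1), lam j) - Λ / 2 with hS
  have hS_step : ∀ k, S (k + 1) = S k + lam (k + 1) := by
    intro k
    simp only [hS, Finset.sum_range_succ]
    ring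
  have hS_anti : ∀ k, S (k + n) = -S k := by
    intro k
    have e1 : k + n + 1 = n + (k + 1) := by omega
    have e2 : ∑ j ∈ Finset.range (n + (k + 1)), lam j
        = Λ + ∑ j ∈ Finset.range (k + 1), lam (n + j) := by
      rw [Finset.sum_range_add]
    have e3 : ∀ j, lam (n + j) = -lam j := by
      intro j; rw [Nat.add_comm n j, hlam_anti]
    simp only [hS, e1, e2]
    rw [Finset.sum_congr rfl fun j _ => e3 j, Finset.sum_neg_distrib]
    ring
  obtain ⟨k₀, hk₀mem, hk₀max⟩ := Finset.exists_max_image (Finset.range n) (fun k => |S k|)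
    ⟨0, Finset.mem_range.2 (by omega)⟩
  set β : ℝ := |S k₀| with hβ
  have hSper : ∀ k, |S (k + n)| = |S k| := fun k => by rw [hS_anti]; exact abs_neg _
  have hSall : ∀ k, |S k| ≤ β := by
    intro k
    induction k using Nat.strong_induction_on with
    | _ k ih =>
      by_cases hk : k < n
      · exact hk₀max k (Finset.mem_range.2 hk)
      · have h1 : k = (k - n) + n := by omega
        rw [h1, hSper]
        exact ih (k - n) (by omega)
  have hβpos : 0 < β := by
    rcases lt_or_ge 0 β with hb | hb
    · exact hb
    · exfalso
      have hS0 : ∀ k, S k = 0 := by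
        intro k
        exact abs_eq_zero.mp (le_antisymm ((hSall k).trans hb) (abs_nonneg (S k)))
      have hlam0 : ∀ k, lam (k + 1) = 0 := by
        intro k
        have := hS_step k
        rw [hS0 k, hS0 (k + 1)] at this
        linarith
      have hΛ0 : Λ = lam 0 := by
        rw [hΛ]
        refine Finset.sum_eq_single_of_mem 0 (Finset.mem_range.2 (by omega)) ?_
        intro j _ hj0
        obtain ⟨i, rfl⟩ := Nat.exists_eq_succ_of_ne_zero hj0
        exact hlam0 i
      have hlam00 : lam 0 = 0 := by
        have := hS0 0
        simp only [hS, zero_add, Finset.sum_range_one, hΛ0] at this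
        linarith
      obtain ⟨k, hkn, hkne⟩ := hlam_ne
      rcases Nat.eq_zero_or_eq_succ_pred k with hk0 | hk1
      · exact hkne (hk0 ▸ hlam00)
      · exact hkne (hk1 ▸ hlam0 (k - 1))
  set Q : ℕ → ℝ := fun m => ∑ k ∈ Finset.range n, S (m + k) with hQ
  have hrowQ : ∀ m', |h * Q (m' + 1)| ≤ ε * β := by
    intro m'
    set m := m' + 1 with hm
    set v : ℕ → ℝ := fun k => F m (x (m + k)) with hv
    have hv0 : v 0 = -1 := by
      simp only [hv, Nat.add_zero]
      exact hFm m
    have hvn : v n = 1 := by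
      simp only [hv]
      rw [hanti m, map_neg, hFm m]
      norm_num
    have hw_le : ∀ k, v (k + 1) - v k ≤ h := by
      intro k
      have e : m + (k + 1) = (m + k) + 1 := by omega
      simp only [hv, e]
      exact hstep m (m + k)
    have hsum_w : ∑ k ∈ Finset.range n, (v (k + 1) - v k) = 2 := by
      rw [Finset.sum_range_sub v n, hv0, hvn]
      norm_num
    have habel : ∑ k ∈ Finset.range n, S (m + k) * (v (k + 1) - v k) = 0 := by
      have point : ∀ k, S (m' + (k + 1)) * v (k + 1) - S (m' + k) * v k
          = S (m + k) * (v (k + 1) - v k) + lam (m + k) * v k := by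
        intro k
        have e2 : S (m' + k + 1) = S (m' + k) + lam (m' + k + 1) := hS_step (m' + k)
        have e3 : m' + k + 1 = m + k := by omega
        rw [e3] at e2
        have e1 : m' + (k + 1) = m + k := by omega
        rw [e1]
        have e4 : S (m' + k) = S (m + k) - lam (m + k) := by linarith
        rw [e4]
        ring
      have tele : ∑ k ∈ Finset.range n, (S (m' + (k + 1)) * v (k + 1) - S (m' + k) * v k)
          = S (m' + n) * v n - S (m' + 0) * v 0 := by
        have := Finset.sum_range_sub (fun k => S (m' + k) * v k) n
        simpa using this
      have expand : ∑ k ∈ Finset.range n, (S (m' + (k + 1)) * v (k + 1) - S (m' + k) * v k)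
          = (∑ k ∈ Finset.range n, S (m + k) * (v (k + 1) - v k))
            + ∑ k ∈ Finset.range n, lam (m + k) * v k := by
        rw [← Finset.sum_add_distrib]
        exact Finset.sum_congr rfl fun k _ => point k
      have hrw : ∑ k ∈ Finset.range n, lam (m + k) * v k = 0 := hrow m
      have hright : S (m' + n) * v n - S (m' + 0) * v 0 = 0 := by
        rw [hvn, hv0, hS_anti m']
        simp
      rw [expand, hrw, add_zero] at tele
      rw [tele, hright]
    have key : h * Q m = ∑ k ∈ Finset.range n, S (m + k) * (h - (v (k + 1) - v k)) := by
      have e1 : ∑ k ∈ Finset.range n, S (m + k) * (h - (v (k + 1) - v k))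
          = (∑ k ∈ Finset.range n, S (m + k) * h)
            - ∑ k ∈ Finset.range n, S (m + k) * (v (k + 1) - v k) := by
        rw [← Finset.sum_sub_distrib]
        exact Finset.sum_congr rfl fun k _ => by ring
      rw [e1, habel, sub_zero]
      show h * (∑ k ∈ Finset.range n, S (m + k)) = _
      rw [Finset.mul_sum]
      exact Finset.sum_congr rfl fun k _ => by ring
    rw [key]
    have step1 : |∑ k ∈ Finset.range n, S (m + k) * (h - (v (k + 1) - v k))|
        ≤ ∑ k ∈ Finset.range n, |S (m + k)| * (h - (v (k + 1) - v k)) := by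
      refine (Finset.abs_sum_le_sum_abs _ _).trans (le_of_eq ?_)
      refine Finset.sum_congr rfl fun k _ => ?_
      rw [abs_mul, abs_of_nonneg (sub_nonneg.2 (hw_le k))]
    have step2 : ∑ k ∈ Finset.range n, |S (m + k)| * (h - (v (k + 1) - v k))
        ≤ ∑ k ∈ Finset.range n, β * (h - (v (k + 1) - v k)) :=
      Finset.sum_le_sum fun k _ =>
        mul_le_mul_of_nonneg_right (hSall _) (sub_nonneg.2 (hw_le k))
    have step3 : ∑ k ∈ Finset.range n, β * (h - (v (k + 1) - v k)) = ε * β := by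
      rw [← Finset.mul_sum, Finset.sum_sub_distrib, hsum_w, Finset.sum_const,
        Finset.card_range, nsmul_eq_mul, hεdef]
      ring
    calc |∑ k ∈ Finset.range n, S (m + k) * (h - (v (k + 1) - v k))|
        ≤ ∑ k ∈ Finset.range n, |S (m + k)| * (h - (v (k + 1) - v k)) := step1
      _ ≤ ∑ k ∈ Finset.range n, β * (h - (v (k + 1) - v k)) := step2
      _ = ε * β := step3
  have hfinal : ∀ m', h * |S (m' + 1)| ≤ ε * β := by
    intro m'
    have h1 := hrowQ m'
    have h2 := hrowQ (m' + 1)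
    have hQdiff : Q (m' + 1 + 1) = Q (m' + 1) - 2 * S (m' + 1) := by
      set m := m' + 1 with hm
      have e3 := Finset.sum_range_succ' (fun k => S (m + k)) n
      have e4 := Finset.sum_range_succ (fun k => S (m + k)) n
      have e2 : Q (m + 1) = ∑ k ∈ Finset.range n, S (m + (k + 1)) := by
        show (∑ k ∈ Finset.range n, S (m + 1 + k)) = _
        exact Finset.sum_congr rfl fun k _ => by rw [show m + 1 + k = m + (k+1) from by omega]
      rw [e2]
      have e6 : ∑ k ∈ Finset.range n, S (m + (k + 1))
          = (∑ k ∈ Finset.range n, S (m + k)) + S (m + n) - S (m + 0) := by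
        rw [← e4, e3]
        abel
      rw [e6, hS_anti m]
      simp only [Nat.add_zero]
      show _ = (∑ k ∈ Finset.range n, S (m + k)) - 2 * S m
      ring
    have e : h * Q (m' + 1) - h * Q (m' + 1 + 1) = h * (2 * S (m' + 1)) := by
      rw [hQdiff]; ring
    have habs2 : |h * (2 * S (m' + 1))| ≤ 2 * (ε * β) := by
      rw [← e, sub_eq_add_neg]
      refine (abs_add_le _ _).trans ?_
      rw [abs_neg]
      linarith
    have hfin : h * (2 * |S (m' + 1)|) ≤ |h * (2 * S (m' + 1))| := by
      rw [abs_mul, abs_mul]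
      have h1' : |(2:ℝ)| = 2 := by norm_num
      rw [h1']
      have h2' := le_abs_self h
      nlinarith [abs_nonneg (S (m' + 1))]
    linarith
  have hk₀n : k₀ < n := Finset.mem_range.1 hk₀mem
  have hexists : ∃ m', |S (m' + 1)| = β := by
    rcases Nat.eq_zero_or_eq_succ_pred k₀ with hk0 | hk1
    · refine ⟨n - 1, ?_⟩
      rw [show n - 1 + 1 = 0 + n from by omega, hSper 0, hβ, hk0]
    · exact ⟨k₀ - 1, by rw [show k₀ - 1 + 1 = k₀ from by omega]⟩
  obtain ⟨m', hm'⟩ := hexists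
  have hfin2 := hfinal m'
  rw [hm'] at hfin2
  exact le_of_mul_le_mul_right hfin2 hβpos

end Core

lemma final_arith {D l : ℝ} (hD : 1 ≤ D) (hcore : l / (D + 1) ≤ l - 2) : 4 + 4 / D ≤ 2 * l := by
  have hDpos : 0 < D := by linarith
  have h2 : l ≤ (l - 2) * (D + 1) := by
    rw [div_le_iff₀ (by linarith : (0:ℝ) < D + 1)] at hcore
    linarith
  have h3 : 4 / D ≤ 2 * l - 4 := by
    rw [div_le_iff₀ hDpos]
    nlinarith
  linarith

/-- Schaffer: a centrally symmetric closed Lipschitz curve on the boundary of a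
centrally symmetric convex body `K ⊂ ℝ^d` has `g_K`-length at least `4 + 4/d`. -/
theorem symmetric_curve_on_boundary_length {d : ℕ} (K : Set (Rd d))
    (hKcomp : IsCompact K) (hKconv : Convex ℝ K) (hK0 : (0 : Rd d) ∈ interior K)
    (hKsym : K = -K)
    (γ : ℝ → Rd d) (L : NNReal) (hlip : LipschitzWith L γ)
    (hper : Function.Periodic γ 1)
    (hbd : ∀ t, γ t ∈ frontier K)
    (hsymm : ∀ t, γ (t + 1 / 2) = -γ t) :
    4 + 4 / (d : ℝ) ≤ ∫ t in (0 : ℝ)..1, gauge K (deriv γ t) := by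
  classical
  have hK0' : K ∈ nhds 0 := mem_interior_iff_mem_nhds.1 hK0
  rcases Nat.eq_zero_or_pos d with hd0 | hdpos
  · -- d = 0 : hypotheses are contradictory
    exfalso
    subst hd0
    have hγ0 : γ 0 = 0 := by
      have : ‖γ 0‖ = 0 := by
        rw [EuclideanSpace.norm_eq]
        simp
      exact norm_eq_zero.1 this
    have h0 := hbd 0
    rw [hγ0] at h0
    exact h0.2 hK0
  -- main case d ≥ 1
  obtain ⟨r, hr, hball⟩ := Metric.mem_nhds_iff.1 hK0'
  have hsymm' : ∀ t, γ (t + 2⁻¹) = -γ t := by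
    intro t
    rw [show (2⁻¹ : ℝ) = 1 / 2 by norm_num]
    exact hsymm t
  have hsymK : ∀ z ∈ K, -z ∈ K := by
    intro z hz
    rw [hKsym]
    simpa using hz
  set n : ℕ := d + 1 with hn
  set G : ℝ → ℝ := fun t => gauge K (deriv γ t) with hG
  have hGmeas : Measurable G :=
    ((continuous_gauge hKconv hK0').measurable).comp (measurable_deriv γ)
  have hGbd : ∀ t, |G t| ≤ r⁻¹ * L := by
    intro t
    rw [hG, abs_of_nonneg (gauge_nonneg _)]
    exact (gauge_le_inv_norm hr hball _).trans
      (mul_le_mul_of_nonneg_left (norm_deriv_le_of_lip hlip t) ((inv_nonneg).2 hr.le))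
  have hGint : ∀ a b : ℝ, IntervalIntegrable G volume a b :=
    intervalIntegrable_of_bdd hGmeas hGbd
  have hGper : ∀ t, G (t + 2⁻¹) = G t := by
    intro t
    have h1 : (fun u => γ (u + 2⁻¹)) = fun u => -γ u := funext fun u => hsymm' u
    have h2 : deriv γ (t + 2⁻¹) = -deriv γ t := by
      calc deriv γ (t + 2⁻¹) = deriv (fun u => γ (u + 2⁻¹)) t :=
            (deriv_comp_add_const γ 2⁻¹ t).symm
        _ = deriv (fun u => -γ u) t := by rw [h1]
        _ = -deriv γ t := deriv.neg
    rw [hG]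
    simp only [h2]
    exact gauge_neg hsymK _
  set ℓ : ℝ := ∫ t in (0:ℝ)..2⁻¹, G t with hℓ
  set A : ℝ → ℝ := fun t => ∫ u in (0:ℝ)..t, G u with hA
  have hA0 : A 0 = 0 := intervalIntegral.integral_same
  have hAab : ∀ a b : ℝ, A a + ∫ t in a..b, G t = A b := fun a b =>
    integral_add_adjacent_intervals (hGint 0 a) (hGint a b)
  have hAmono : ∀ a b : ℝ, a ≤ b → A a ≤ A b := by
    intro a b hab
    have h1 := hAab a b
    have h2 : (0:ℝ) ≤ ∫ t in a..b, G t :=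
      intervalIntegral.integral_nonneg hab (fun u _ => gauge_nonneg _)
    linarith
  have hAcont : Continuous A := by
    have hlipA : LipschitzWith (Real.toNNReal (r⁻¹ * L)) A := by
      refine LipschitzWith.of_dist_le_mul ?_
      intro a b
      rw [Real.dist_eq, Real.dist_eq]
      have h1 := hAab b a
      have h2 : A a - A b = ∫ t in b..a, G t := by linarith
      rw [h2]
      have h3 : ∀ x ∈ Set.uIoc b a, ‖G x‖ ≤ r⁻¹ * L := fun x _ => by
        rw [Real.norm_eq_abs]; exact hGbd x
      have := intervalIntegral.norm_integral_le_of_norm_le_const h3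
      rw [Real.norm_eq_abs] at this
      refine this.trans ?_
      rw [Real.coe_toNNReal _ (by positivity)]
    exact hlipA.continuous
  have hAhalf : A 2⁻¹ = ℓ := rfl
  have hA_shift : ∀ t, A (t + 2⁻¹) = A t + ℓ := by
    intro t
    have h1 : A 2⁻¹ = ℓ := hAhalf
    have h2 : ∫ u in (2⁻¹:ℝ)..(t + 2⁻¹), G u = ∫ u in (0:ℝ)..t, G u := by
      have h3 := intervalIntegral.integral_comp_add_right (a := (0:ℝ)) (b := t) G 2⁻¹
      rw [zero_add] at h3
      rw [← h3]
      exact intervalIntegral.integral_congr (fun u _ => (hGper u))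
    have h4 := hAab 2⁻¹ (t + 2⁻¹)
    rw [h2, h1] at h4
    have h5 := hAab 0 t
    rw [hA0, zero_add] at h5
    linarith
  have hℓ0 : 0 ≤ ℓ := by
    have := hAmono 0 2⁻¹ (by norm_num)
    rw [hA0] at this
    exact this
  set h : ℝ := ℓ / n with hh
  have hnpos : 0 < n := by omega
  have hh0 : 0 ≤ h := div_nonneg hℓ0 (by positivity)
  have hnh : (n:ℝ) * h = ℓ := by
    rw [hh]
    field_simp
  -- the subdivision points
  set Si : ℕ → Set ℝ := fun i => {t : ℝ | t ∈ Icc (0:ℝ) 2⁻¹ ∧ (i:ℝ) * h ≤ A t} with hSi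
  have hSiclosed : ∀ i, IsClosed (Si i) := by
    intro i
    have : Si i = Icc (0:ℝ) 2⁻¹ ∩ A ⁻¹' (Ici ((i:ℝ) * h)) := rfl
    rw [this]
    exact isClosed_Icc.inter (isClosed_Ici.preimage hAcont)
  have hSine : ∀ i, i ≤ n → (Si i).Nonempty := by
    intro i hi
    refine ⟨2⁻¹, ⟨by norm_num, le_rfl⟩, ?_⟩
    rw [hAhalf, ← hnh]
    have : (i:ℝ) ≤ n := by exact_mod_cast hi
    nlinarith
  have hSibdd : ∀ i, BddBelow (Si i) := fun i => ⟨0, fun t ht => ht.1.1⟩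
  set τ : ℕ → ℝ := fun i => sInf (Si i) with hτ
  have hτmem : ∀ i, i ≤ n → τ i ∈ Si i := fun i hi =>
    (hSiclosed i).csInf_mem (hSine i hi) (hSibdd i)
  have hτval : ∀ i, i ≤ n → A (τ i) = i * h := by
    intro i hi
    have hmem := hτmem i hi
    refine le_antisymm ?_ hmem.2
    by_contra hlt
    push_neg at hlt
    have h0τ : (0:ℝ) ≤ τ i := hmem.1.1
    have hIcc : ((i:ℝ) * h) ∈ Icc (A 0) (A (τ i)) := by
      constructor
      · rw [hA0]; positivity
      · exact hmem.2
    obtain ⟨s, hs1, hs2⟩ := intermediate_value_Icc h0τ hAcont.continuousOn hIcc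
    have hsSi : s ∈ Si i := ⟨⟨hs1.1, hs1.2.trans hmem.1.2⟩, le_of_eq hs2.symm⟩
    have : τ i ≤ s := csInf_le (hSibdd i) hsSi
    have : A (τ i) ≤ A s := hAmono _ _ this
    rw [hs2] at this
    linarith
  have hτmono : ∀ i j, i ≤ j → j ≤ n → τ i ≤ τ j := by
    intro i j hij hj
    refine csInf_le_csInf (hSibdd i) (hSine j hj) ?_
    intro t ht
    refine ⟨ht.1, le_trans ?_ ht.2⟩
    have : (i:ℝ) ≤ j := by exact_mod_cast hij
    nlinarith
  have hτ0 : τ 0 = 0 := by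
    refine le_antisymm ?_ ((hτmem 0 (by omega)).1.1)
    refine csInf_le (hSibdd 0) ?_
    refine ⟨⟨le_rfl, by norm_num⟩, ?_⟩
    rw [hA0]
    simp
  -- the sequence of times
  set t : ℕ → ℝ := fun k => (k / n : ℕ) * (2⁻¹:ℝ) + τ (k % n) with ht
  have hAshift_q : ∀ (q : ℕ) (s : ℝ), A (s + q * 2⁻¹) = A s + q * ℓ := by
    intro q
    induction q with
    | zero => intro s; simp
    | succ q ih =>
      intro s
      have e1 : s + (q+1 : ℕ) * (2⁻¹:ℝ) = (s + q * 2⁻¹) + 2⁻¹ := by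
        push_cast
        ring
      rw [e1, hA_shift, ih]
      push_cast
      ring
  have hAt : ∀ k, A (t k) = k * h := by
    intro k
    have hmod : k % n ≤ n := le_of_lt (Nat.mod_lt k hnpos)
    rw [ht]
    simp only
    rw [add_comm ((k / n : ℕ) * (2⁻¹:ℝ)) (τ (k % n))]
    rw [hAshift_q (k / n) (τ (k % n)), hτval _ hmod, ← hnh]
    have : ((k % n : ℕ) : ℝ) + ((k / n : ℕ) : ℝ) * (n:ℝ) = (k:ℝ) := by
      have := Nat.mod_add_div' k n
      exact_mod_cast congrArg (fun z : ℕ => (z : ℝ)) this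
    nlinarith [this]
  have htmono : ∀ k, t k ≤ t (k + 1) := by
    intro k
    have hkmod : k % n < n := Nat.mod_lt k hnpos
    have hdm : n * (k / n) + k % n = k := Nat.div_add_mod k n
    by_cases hc : k % n + 1 < n
    · have e1 : (k + 1) % n = k % n + 1 := by
        conv_lhs => rw [← hdm]
        rw [Nat.add_assoc, Nat.mul_add_mod]
        exact Nat.mod_eq_of_lt hc
      have e2 : (k + 1) / n = k / n := by
        conv_lhs => rw [← hdm]
        rw [Nat.add_assoc, Nat.mul_add_div hnpos]
        rw [Nat.div_eq_of_lt hc, Nat.add_zero]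
      rw [ht]
      simp only [e1, e2]
      have := hτmono (k % n) (k % n + 1) (by omega) (by omega)
      linarith
    · have hceq : k % n + 1 = n := by omega
      have e1 : (k + 1) % n = 0 := by
        conv_lhs => rw [← hdm]
        rw [Nat.add_assoc, hceq, ← Nat.mul_succ, Nat.mul_mod_right]
      have e2 : (k + 1) / n = k / n + 1 := by
        conv_lhs => rw [← hdm]
        rw [Nat.add_assoc, hceq, ← Nat.mul_succ, Nat.mul_div_right _ hnpos]
      rw [ht]
      simp only [e1, e2, hτ0, add_zero]
      have hτle : τ (k % n) ≤ 2⁻¹ := (hτmem _ (le_of_lt hkmod)).1.2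
      push_cast
      linarith
  set x : ℕ → Rd d := fun k => γ (t k) with hx
  have hxanti : ∀ k, x (k + n) = -x k := by
    intro k
    have e1 : (k + n) % n = k % n := Nat.add_mod_right k n
    have e2 : (k + n) / n = k / n + 1 := by
      rw [Nat.add_div_right _ hnpos]
    have e3 : t (k + n) = t k + 2⁻¹ := by
      rw [ht]
      simp only [e1, e2]
      push_cast
      ring
    rw [hx]
    simp only [e3]
    exact hsymm' (t k)
  have hxgauge : ∀ k, gauge K (x k) = 1 := fun k =>
    (gauge_eq_one_iff_mem_frontier hKconv hK0').2 (hbd (t k))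
  -- support functionals
  have hbal : Balanced ℝ K := balanced_of_symm hKconv hKsym
  have hFex : ∀ m : ℕ, ∃ f : Rd d →ₗ[ℝ] ℝ, (∀ z, f z ≤ gauge K z) ∧ f (x m) = -1 := by
    intro m
    exact exists_gauge_support hKconv hK0' (le_of_eq (hxgauge m).symm) hbal
  set F : ℕ → (Rd d →ₗ[ℝ] ℝ) := fun m => Classical.choose (hFex m) with hF
  have hFle : ∀ m z, F m z ≤ gauge K z := fun m => (Classical.choose_spec (hFex m)).1
  have hFm : ∀ m, F m (x m) = -1 := fun m => (Classical.choose_spec (hFex m)).2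
  have hstep : ∀ m k, F m (x (k + 1)) - F m (x k) ≤ h := by
    intro m k
    have hchord := chord_le_integral hKconv hK0' hr hball hlip (F m) (hFle m) (htmono k)
    have hint : ∫ s in (t k)..(t (k+1)), G s = h := by
      have := hAab (t k) (t (k + 1))
      rw [hAt k, hAt (k+1)] at this
      push_cast at this
      linarith
    have hchord' : F m (x (k + 1)) - F m (x k) ≤ ∫ s in (t k)..(t (k+1)), G s := hchord
    exact hchord'.trans (le_of_eq hint)
  -- linear dependence
  have hdep0 : ¬ LinearIndependent ℝ (fun i : Fin n => x (i : ℕ)) := by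
    intro hli
    have h1 := hli.fintype_card_le_finrank
    rw [Fintype.card_fin, finrank_euclideanSpace_fin] at h1
    omega
  obtain ⟨g, hg, i₀, hi₀⟩ := Fintype.not_linearIndependent_iff.1 hdep0
  set g' : ℕ → ℝ := fun j => if hj : j < n then g ⟨j, hj⟩ else 0 with hg'
  set lam : ℕ → ℝ := fun k => (-1 : ℝ) ^ (k / n) * g' (k % n) with hlam
  have hlam_small : ∀ k (hk : k < n), lam k = g ⟨k, hk⟩ := by
    intro k hk
    simp only [hlam, hg']
    rw [Nat.div_eq_of_lt hk, Nat.mod_eq_of_lt hk, pow_zero, one_mul, dif_pos hk]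
  have hlam_anti : ∀ k, lam (k + n) = -lam k := by
    intro k
    simp only [hlam, Nat.add_mod_right, Nat.add_div_right _ hnpos, pow_succ]
    ring
  have hdep : ∑ k ∈ Finset.range n, lam k • x k = 0 := by
    have e1 : ∑ k ∈ Finset.range n, lam k • x k
        = ∑ i : Fin n, g i • x (i : ℕ) := by
      rw [← Fin.sum_univ_eq_sum_range (fun k => lam k • x k) n]
      refine Finset.sum_congr rfl fun i _ => ?_
      rw [hlam_small (i : ℕ) i.isLt]
    rw [e1]
    exact hg
  have hlam_ne : ∃ k, k < n ∧ lam k ≠ 0 := by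
    refine ⟨(i₀ : ℕ), i₀.isLt, ?_⟩
    rw [hlam_small _ i₀.isLt]
    simpa using hi₀
  -- apply the core inequality
  have hcore : h ≤ (n : ℝ) * h - 2 :=
    core_ineq (by omega) hxanti hlam_anti hdep hlam_ne rfl F hFm hstep
  -- conclude
  have hint1 : (∫ s in (0:ℝ)..1, G s) = 2 * ℓ := by
    have h2 := hA_shift 2⁻¹
    rw [hAhalf] at h2
    have e : (2⁻¹:ℝ) + 2⁻¹ = 1 := by norm_num
    rw [e] at h2
    have h1 : A 1 = 2 * ℓ := by linarith
    exact h1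
  rw [hint1]
  rw [hnh] at hcore
  have hD : (1:ℝ) ≤ (d:ℝ) := by exact_mod_cast hdpos
  have hh_eq : h = ℓ / ((d:ℝ) + 1) := by
    rw [hh, hn]
    push_cast
    ring_nf
  rw [hh_eq] at hcore
  exact final_arith hD hcore
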